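/- For all real ν > 1/2 and all x > 0, K_{ν−1}(x)/K_ν(x) < x/(ν − 1 + √((ν−1)² + x²)). -/

import Mathlib

open Real

/-- Modified Bessel function of the first kind `I_ν(x)` (for `x > 0`),
defined by its standard power series. -/
noncomputable def besselI (ν x : ℝ) : ℝ :=
  ∑' k : ℕ, (x / 2) ^ (2 * k) / ((Nat.factorial k : ℝ) * Real.Gamma (k + ν + 1)) * (x / 2) ^ ν

/-- Modified Bessel function of the second kind `K_ν(x)` (for `x > 0`),
defined by its standard integral representation. -/
noncomputable def besselK (ν x : ℝ) : ℝ :=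
  ∫ t in Set.Ioi (0 : ℝ), Real.exp (-x * Real.cosh t) * Real.cosh (ν * t)
open Real MeasureTheory Set Filter

-- basic bounds
lemma cosh_le_exp_abs (u : ℝ) : Real.cosh u ≤ Real.exp |u| := by
  rw [← Real.cosh_abs, Real.cosh_eq]
  have h1 : Real.exp (-|u|) ≤ Real.exp |u| := Real.exp_le_exp.2 ((neg_abs_le u).trans (le_abs_self u))
  linarith

lemma sq_div_four_le_cosh (u : ℝ) : u ^ 2 / 4 ≤ Real.cosh u := by
  rw [← Real.cosh_abs, Real.cosh_eq]
  have h1 := Real.quadratic_le_exp_of_nonneg (abs_nonneg u)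
  have h2 : 0 < Real.exp (-|u|) := Real.exp_pos _
  have : |u| ^ 2 = u ^ 2 := sq_abs u
  nlinarith [abs_nonneg u]

lemma master_integrable {x : ℝ} (hx : 0 < x) {g : ℝ → ℝ} (hg : Continuous g) {r : ℝ}
    (hr : ∀ t, 0 ≤ t → |g t| ≤ Real.exp (r * t)) :
    IntegrableOn (fun t => Real.exp (-x * Real.cosh t) * g t) (Set.Ioi (0:ℝ)) := by
  have hbase : Integrable (fun t : ℝ => Real.exp (-(x/4) * t ^ 2)) :=
    integrable_exp_neg_mul_sq (by positivity)
  have hshift : Integrable (fun t : ℝ => Real.exp (-(x/4) * (t - 2*r/x) ^ 2)) :=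
    hbase.comp_sub_right (2*r/x)
  have hdom : Integrable (fun t : ℝ => Real.exp (r^2/x) * Real.exp (-(x/4) * (t - 2*r/x) ^ 2)) :=
    hshift.const_mul _
  refine Integrable.mono' hdom.integrableOn ?_ ?_
  · exact (((Real.continuous_exp.comp (continuous_const.mul Real.continuous_cosh)).mul
      hg)).aestronglyMeasurable
  · filter_upwards [ae_restrict_mem measurableSet_Ioi] with t ht
    have ht0 : (0:ℝ) ≤ t := le_of_lt ht
    have h1 : |Real.exp (-x * Real.cosh t) * g t| ≤ Real.exp (-x * Real.cosh t) * Real.exp (r * t) := by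
      rw [abs_mul, abs_of_pos (Real.exp_pos _)]
      exact mul_le_mul_of_nonneg_left (hr t ht0) (Real.exp_pos _).le
    have h2 : Real.exp (-x * Real.cosh t) * Real.exp (r * t)
        ≤ Real.exp (r^2/x) * Real.exp (-(x/4) * (t - 2*r/x) ^ 2) := by
      rw [← Real.exp_add, ← Real.exp_add, Real.exp_le_exp]
      have h3 := sq_div_four_le_cosh t
      have h4 : -x * Real.cosh t ≤ -x * (t^2/4) := by nlinarith
      have : r^2/x + -(x/4) * (t - 2*r/x) ^ 2 = -(x/4)*t^2 + r*t := by field_simp; ring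
      nlinarith
    calc ‖Real.exp (-x * Real.cosh t) * g t‖ = |Real.exp (-x * Real.cosh t) * g t| := rfl
      _ ≤ _ := h1.trans h2

lemma besselK_integrand_integrable {x : ℝ} (hx : 0 < x) (ν : ℝ) :
    IntegrableOn (fun t => Real.exp (-x * Real.cosh t) * Real.cosh (ν * t)) (Set.Ioi (0:ℝ)) := by
  refine master_integrable hx (Real.continuous_cosh.comp (continuous_const.mul continuous_id)) (r := |ν|) ?_
  intro t ht
  rw [abs_of_pos (Real.cosh_pos _)]
  calc Real.cosh (ν * t) ≤ Real.exp |ν * t| := cosh_le_exp_abs _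
    _ = Real.exp (|ν| * t) := by rw [abs_mul, abs_of_nonneg ht]

lemma besselK_pos {x : ℝ} (hx : 0 < x) (ν : ℝ) : 0 < besselK ν x := by
  rw [besselK]
  rw [setIntegral_pos_iff_support_of_nonneg_ae]
  · have hs : Set.Ioi (0:ℝ) ⊆ Function.support
        (fun t => Real.exp (-x * Real.cosh t) * Real.cosh (ν * t)) := by
      intro t _
      exact ne_of_gt (mul_pos (Real.exp_pos _) (Real.cosh_pos _))
    calc (0:ENNReal) < volume (Set.Ioi (0:ℝ)) := by simp
      _ = volume (Function.support _ ∩ Set.Ioi (0:ℝ)) := by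
          rw [Set.inter_eq_self_of_subset_right hs]
  · filter_upwards with t
    exact mul_nonneg (Real.exp_pos _).le (Real.cosh_pos _).le
  · exact besselK_integrand_integrable hx ν

lemma tendsto_aux {x ν : ℝ} (hx : 0 < x) :
    Tendsto (fun t => Real.exp (-x * Real.cosh t) * Real.sinh (ν * t)) atTop (nhds 0) := by
  rw [tendsto_zero_iff_norm_tendsto_zero]
  have hbound : ∀ᶠ t in atTop, ‖Real.exp (-x * Real.cosh t) * Real.sinh (ν * t)‖
      ≤ Real.exp (-((x/4)*t^2 - |ν| * t)) := by
    filter_upwards [eventually_ge_atTop (0:ℝ)] with t ht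
    rw [norm_mul, Real.norm_eq_abs, Real.norm_eq_abs, abs_of_pos (Real.exp_pos _)]
    have h1 : |Real.sinh (ν*t)| ≤ Real.exp (|ν| * t) := by
      rw [Real.abs_sinh]
      calc Real.sinh |ν * t| ≤ Real.cosh |ν * t| := by
            have := Real.cosh_sub_sinh |ν * t|
            have := Real.exp_pos (-|ν * t|)
            linarith
        _ ≤ Real.exp |(|ν * t|)| := cosh_le_exp_abs _
        _ = Real.exp (|ν| * t) := by rw [abs_abs, abs_mul, abs_of_nonneg ht]
    calc Real.exp (-x * Real.cosh t) * |Real.sinh (ν*t)|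
        ≤ Real.exp (-x * Real.cosh t) * Real.exp (|ν| * t) :=
          mul_le_mul_of_nonneg_left h1 (Real.exp_pos _).le
      _ ≤ Real.exp (-((x/4)*t^2 - |ν| * t)) := by
          rw [← Real.exp_add, Real.exp_le_exp]
          nlinarith [sq_div_four_le_cosh t]
  have hlim : Tendsto (fun t => Real.exp (-((x/4)*t^2 - |ν| * t))) atTop (nhds 0) := by
    apply Real.tendsto_exp_neg_atTop_nhds_zero.comp
    have : Tendsto (fun t : ℝ => t * ((x/4)*t - |ν|)) atTop atTop := by
      apply Tendsto.atTop_mul_atTop₀ tendsto_id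
      apply tendsto_atTop_add_const_right
      exact (tendsto_const_mul_atTop_of_pos (by positivity)).2 tendsto_id
    apply this.congr
    intro t; ring
  exact squeeze_zero' (by filter_upwards with t using norm_nonneg _) hbound hlim

lemma sinh_integrable {x : ℝ} (hx : 0 < x) (ν : ℝ) :
    IntegrableOn (fun t => Real.exp (-x * Real.cosh t) * (Real.sinh t * Real.sinh (ν * t)))
      (Set.Ioi (0:ℝ)) := by
  refine master_integrable hx (Real.continuous_sinh.mul
    (Real.continuous_sinh.comp (continuous_const.mul continuous_id))) (r := 1 + |ν|) ?_
  intro t ht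
  have h1 : |Real.sinh t| ≤ Real.exp |t| := by
    rw [Real.abs_sinh]
    have := Real.cosh_sub_sinh |t|
    have := Real.exp_pos (-|t|)
    have := cosh_le_exp_abs |t|
    rw [abs_abs] at this
    linarith
  have h2 : |Real.sinh (ν * t)| ≤ Real.exp (|ν| * t) := by
    have hnn : (0:ℝ) ≤ |ν| * t := mul_nonneg (abs_nonneg ν) ht
    have he : |ν * t| = |ν| * t := by rw [abs_mul, abs_of_nonneg ht]
    rw [Real.abs_sinh, he]
    have hc := Real.cosh_sub_sinh (|ν| * t)
    have hp := Real.exp_pos (-(|ν| * t))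
    have h3 := cosh_le_exp_abs (|ν| * t)
    rw [abs_of_nonneg hnn] at h3
    linarith
  calc |Real.sinh t * Real.sinh (ν * t)| = |Real.sinh t| * |Real.sinh (ν * t)| := abs_mul _ _
    _ ≤ Real.exp |t| * Real.exp (|ν| * t) := by
        apply mul_le_mul h1 h2 (abs_nonneg _) (Real.exp_pos _).le
    _ = Real.exp ((1 + |ν|) * t) := by rw [← Real.exp_add, abs_of_nonneg ht]; ring_nf

lemma besselK_recurrence {x : ℝ} (hx : 0 < x) (ν : ℝ) :
    besselK (ν+1) x - besselK (ν-1) x = (2*ν/x) * besselK ν x := by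
  set A : ℝ → ℝ := fun t => Real.exp (-x * Real.cosh t) * (Real.sinh t * Real.sinh (ν * t))
    with hA
  set B : ℝ → ℝ := fun t => Real.exp (-x * Real.cosh t) * Real.cosh (ν * t) with hB
  have hAint : IntegrableOn A (Set.Ioi (0:ℝ)) := sinh_integrable hx ν
  have hBint : IntegrableOn B (Set.Ioi (0:ℝ)) := besselK_integrand_integrable hx ν
  -- integration by parts : ∫ A = (ν/x) ∫ B
  have key : ∫ t in Set.Ioi (0:ℝ), A t = (ν/x) * besselK ν x := by
    set F : ℝ → ℝ := fun t => (-(1/x)) * (Real.exp (-x * Real.cosh t) * Real.sinh (ν * t))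
      with hF
    have hderiv : ∀ t ∈ Set.Ioi (0:ℝ), HasDerivAt F (A t - (ν/x) * B t) t := by
      intro t _
      have h1 : HasDerivAt (fun t : ℝ => Real.exp (-x * Real.cosh t))
          (Real.exp (-x * Real.cosh t) * (-x * Real.sinh t)) t :=
        ((Real.hasDerivAt_cosh t).const_mul (-x)).exp
      have h2 : HasDerivAt (fun t : ℝ => Real.sinh (ν * t)) (Real.cosh (ν * t) * ν) t := by
        simpa using ((hasDerivAt_id t).const_mul ν).sinh
      have h3 := (h1.mul h2).const_mul (-(1/x))
      convert h3 using 1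
      · rfl
      · rfl
      · rfl
      simp only [hA, hB]
      field_simp
      ring
    have htend : Tendsto F atTop (nhds 0) := by
      have h := (tendsto_aux (ν := ν) hx).const_mul (-(1/x))
      rw [show ((-(1/x)) * (0:ℝ)) = 0 by ring] at h
      exact h
    have hint : IntegrableOn (fun t => A t - (ν/x) * B t) (Set.Ioi (0:ℝ)) :=
      hAint.sub (hBint.const_mul _)
    have hcont : ContinuousWithinAt F (Set.Ici (0:ℝ)) 0 := by
      apply Continuous.continuousWithinAt
      continuity
    have h0 : F 0 = 0 := by simp [hF]
    have := integral_Ioi_of_hasDerivAt_of_tendsto hcont hderiv hint htend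
    rw [h0, sub_zero] at this
    have hsplit : ∫ t in Set.Ioi (0:ℝ), (A t - (ν/x) * B t)
        = (∫ t in Set.Ioi (0:ℝ), A t) - (ν/x) * ∫ t in Set.Ioi (0:ℝ), B t := by
      rw [integral_sub hAint (hBint.const_mul _), integral_const_mul]
    rw [hsplit] at this
    have : (∫ t in Set.Ioi (0:ℝ), A t) = (ν/x) * ∫ t in Set.Ioi (0:ℝ), B t := by linarith
    rw [this]; rfl
  -- pointwise identity and conclusion
  have hpt : ∀ t : ℝ, Real.exp (-x * Real.cosh t) * Real.cosh ((ν+1) * t)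
      - Real.exp (-x * Real.cosh t) * Real.cosh ((ν-1) * t) = 2 * A t := by
    intro t
    have e1 : (ν+1) * t = ν*t + t := by ring
    have e2 : (ν-1) * t = ν*t - t := by ring
    rw [e1, e2, Real.cosh_add, Real.cosh_sub, hA]
    ring
  have hsub : besselK (ν+1) x - besselK (ν-1) x = ∫ t in Set.Ioi (0:ℝ), 2 * A t := by
    rw [besselK, besselK, ← integral_sub (besselK_integrand_integrable hx (ν+1))
      (besselK_integrand_integrable hx (ν-1))]
    exact setIntegral_congr_fun measurableSet_Ioi (fun t _ => hpt t)
  rw [hsub, integral_const_mul, key]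
  ring

lemma cs_integral {f g : ℝ → ℝ} (hf2 : IntegrableOn (fun t => f t ^ 2) (Set.Ioi (0:ℝ)))
    (hg2 : IntegrableOn (fun t => g t ^ 2) (Set.Ioi (0:ℝ)))
    (hfg : IntegrableOn (fun t => f t * g t) (Set.Ioi (0:ℝ)))
    (hG : 0 < ∫ t in Set.Ioi (0:ℝ), g t ^ 2) :
    (∫ t in Set.Ioi (0:ℝ), f t * g t) ^ 2
      ≤ (∫ t in Set.Ioi (0:ℝ), f t ^ 2) * ∫ t in Set.Ioi (0:ℝ), g t ^ 2 := by
  set I := ∫ t in Set.Ioi (0:ℝ), f t * g t with hI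
  set G := ∫ t in Set.Ioi (0:ℝ), g t ^ 2 with hGdef
  set Fq := ∫ t in Set.Ioi (0:ℝ), f t ^ 2 with hFq
  have h0 : 0 ≤ ∫ t in Set.Ioi (0:ℝ), (G * f t - I * g t) ^ 2 :=
    setIntegral_nonneg measurableSet_Ioi (fun t _ => sq_nonneg _)
  have hexp : (fun t => (G * f t - I * g t) ^ 2)
      = fun t => G^2 * f t ^2 - (2*G*I) * (f t * g t) + I^2 * g t ^2 := by
    funext t; ring
  have hint : ∫ t in Set.Ioi (0:ℝ), (G * f t - I * g t) ^ 2
      = G^2 * Fq - (2*G*I) * I + I^2 * G := by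
    rw [hexp, integral_add, integral_sub, integral_const_mul, integral_const_mul,
      integral_const_mul]
    · exact (hf2.const_mul _)
    · exact (hfg.const_mul _)
    · exact ((hf2.const_mul _).sub (hfg.const_mul _))
    · exact (hg2.const_mul _)
  rw [hint] at h0
  nlinarith [hG]

lemma integral_lt_integral_aux {F G : ℝ → ℝ} (hF : IntegrableOn F (Set.Ioi (0:ℝ)))
    (hG : IntegrableOn G (Set.Ioi (0:ℝ))) (h : ∀ t, 0 < t → F t < G t) :
    (∫ t in Set.Ioi (0:ℝ), F t) < ∫ t in Set.Ioi (0:ℝ), G t := by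
  have hdiff : 0 < ∫ t in Set.Ioi (0:ℝ), (G t - F t) := by
    rw [setIntegral_pos_iff_support_of_nonneg_ae]
    · have hs : Set.Ioi (0:ℝ) ⊆ Function.support (fun t => G t - F t) := fun t ht =>
        ne_of_gt (sub_pos.2 (h t ht))
      calc (0:ENNReal) < volume (Set.Ioi (0:ℝ)) := by simp
        _ = volume (Function.support (fun t => G t - F t) ∩ Set.Ioi (0:ℝ)) := by
            rw [Set.inter_eq_self_of_subset_right hs]
    · filter_upwards [ae_restrict_mem measurableSet_Ioi] with t ht
      exact sub_nonneg.2 (h t ht).le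
    · exact hG.sub hF
  rw [integral_sub hG hF] at hdiff
  linarith

lemma turan {x : ℝ} (hx : 0 < x) (μ : ℝ) :
    (besselK μ x)^2 < besselK (μ-1) x * besselK (μ+1) x := by
  set f : ℝ → ℝ := fun t => Real.exp (-x * Real.cosh t / 2) * Real.sqrt (Real.cosh ((μ-1) * t))
    with hf
  set g : ℝ → ℝ := fun t => Real.exp (-x * Real.cosh t / 2) * Real.sqrt (Real.cosh ((μ+1) * t))
    with hg
  have hf2 : (fun t => f t ^ 2)
      = fun t => Real.exp (-x * Real.cosh t) * Real.cosh ((μ-1) * t) := by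
    funext t
    have he : Real.exp (-x * Real.cosh t / 2) ^ 2 = Real.exp (-x * Real.cosh t) := by
      rw [← Real.exp_nat_mul]; congr 1; ring
    rw [hf, mul_pow, he, Real.sq_sqrt (Real.cosh_pos _).le]
  have hg2 : (fun t => g t ^ 2)
      = fun t => Real.exp (-x * Real.cosh t) * Real.cosh ((μ+1) * t) := by
    funext t
    have he : Real.exp (-x * Real.cosh t / 2) ^ 2 = Real.exp (-x * Real.cosh t) := by
      rw [← Real.exp_nat_mul]; congr 1; ring
    rw [hg, mul_pow, he, Real.sq_sqrt (Real.cosh_pos _).le]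
  have hfg : (fun t => f t * g t)
      = fun t => Real.exp (-x * Real.cosh t)
        * Real.sqrt (Real.cosh ((μ-1) * t) * Real.cosh ((μ+1) * t)) := by
    funext t
    simp only [hf, hg]
    rw [Real.sqrt_mul (Real.cosh_pos _).le]
    have he : Real.exp (-x * Real.cosh t / 2) * Real.exp (-x * Real.cosh t / 2)
        = Real.exp (-x * Real.cosh t) := by rw [← Real.exp_add]; congr 1; ring
    rw [← he]; ring
  -- integrability of f*g
  have hfgint : IntegrableOn (fun t => f t * g t) (Set.Ioi (0:ℝ)) := by
    rw [hfg]
    refine master_integrable hx ?_ (r := |μ| + 1) ?_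
    · exact Real.continuous_sqrt.comp ((Real.continuous_cosh.comp
        (continuous_const.mul continuous_id)).mul (Real.continuous_cosh.comp
        (continuous_const.mul continuous_id)))
    · intro t ht
      have hb : ∀ c : ℝ, |c| ≤ |μ| + 1 → Real.cosh (c * t) ≤ Real.exp ((|μ| + 1) * t) := by
        intro c hc
        calc Real.cosh (c * t) ≤ Real.exp |c * t| := cosh_le_exp_abs _
          _ ≤ Real.exp ((|μ| + 1) * t) := by
              rw [Real.exp_le_exp, abs_mul, abs_of_nonneg ht]
              exact mul_le_mul_of_nonneg_right hc ht
      have h1 := hb (μ-1) (by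
        calc |μ - 1| ≤ |μ| + |(1:ℝ)| := abs_sub μ 1
          _ = |μ| + 1 := by norm_num)
      have h2 := hb (μ+1) (by
        calc |μ + 1| ≤ |μ| + |(1:ℝ)| := abs_add_le μ 1
          _ = |μ| + 1 := by norm_num)
      rw [abs_of_nonneg (Real.sqrt_nonneg _)]
      have hprod : Real.cosh ((μ-1)*t) * Real.cosh ((μ+1)*t)
          ≤ Real.exp ((|μ| + 1) * t) ^ 2 := by
        rw [sq]
        exact mul_le_mul h1 h2 (Real.cosh_pos _).le (Real.exp_pos _).le
      calc Real.sqrt (Real.cosh ((μ-1)*t) * Real.cosh ((μ+1)*t))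
          ≤ Real.sqrt (Real.exp ((|μ| + 1) * t) ^ 2) := Real.sqrt_le_sqrt hprod
        _ = Real.exp ((|μ| + 1) * t) := Real.sqrt_sq (Real.exp_pos _).le
  -- pointwise identity
  have hid : ∀ t : ℝ, Real.cosh ((μ-1) * t) * Real.cosh ((μ+1) * t)
      = Real.cosh (μ*t)^2 + Real.sinh t^2 := by
    intro t
    have e1 : (μ-1) * t = μ*t - t := by ring
    have e2 : (μ+1) * t = μ*t + t := by ring
    rw [e1, e2, Real.cosh_sub, Real.cosh_add]
    nlinarith [Real.cosh_sq_sub_sinh_sq (μ*t), Real.cosh_sq_sub_sinh_sq t]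
  -- strict inequality besselK μ x < ∫ f*g
  have hfgint' : IntegrableOn (fun t => Real.exp (-x * Real.cosh t)
      * Real.sqrt (Real.cosh ((μ-1) * t) * Real.cosh ((μ+1) * t))) (Set.Ioi (0:ℝ)) := by
    rw [← hfg]; exact hfgint
  have hlt : besselK μ x < ∫ t in Set.Ioi (0:ℝ), f t * g t := by
    rw [besselK, hfg]
    apply integral_lt_integral_aux (besselK_integrand_integrable hx μ) hfgint'
    intro t ht
    have hs : 0 < Real.sinh t := Real.sinh_pos_iff.2 ht
    have hc : Real.cosh (μ*t) < Real.sqrt (Real.cosh ((μ-1)*t) * Real.cosh ((μ+1)*t)) := by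
      rw [hid t]
      calc Real.cosh (μ*t) = Real.sqrt (Real.cosh (μ*t)^2) :=
            (Real.sqrt_sq (Real.cosh_pos _).le).symm
        _ < Real.sqrt (Real.cosh (μ*t)^2 + Real.sinh t^2) :=
            Real.sqrt_lt_sqrt (sq_nonneg _) (by nlinarith)
    exact mul_lt_mul_of_pos_left hc (Real.exp_pos _)
  -- Cauchy-Schwarz
  have hf2int : IntegrableOn (fun t => f t ^ 2) (Set.Ioi (0:ℝ)) := by
    rw [hf2]; exact besselK_integrand_integrable hx (μ-1)
  have hg2int : IntegrableOn (fun t => g t ^ 2) (Set.Ioi (0:ℝ)) := by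
    rw [hg2]; exact besselK_integrand_integrable hx (μ+1)
  have hf2eq : (∫ t in Set.Ioi (0:ℝ), f t ^ 2) = besselK (μ-1) x := by
    rw [hf2, besselK]
  have hg2eq : (∫ t in Set.Ioi (0:ℝ), g t ^ 2) = besselK (μ+1) x := by
    rw [hg2, besselK]
  have hG : 0 < ∫ t in Set.Ioi (0:ℝ), g t ^ 2 := by
    rw [hg2eq]; exact besselK_pos hx (μ+1)
  have hcs := cs_integral hf2int hg2int hfgint hG
  rw [hf2eq, hg2eq] at hcs
  have hposμ := besselK_pos hx μ
  nlinarith [hlt, hcs, hposμ]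

theorem besselK_ratio_upper_bound (ν x : ℝ) (hν : 1 / 2 < ν) (hx : 0 < x) :
    besselK (ν - 1) x / besselK ν x < x / (ν - 1 + Real.sqrt ((ν - 1) ^ 2 + x ^ 2)) := by
  set μ := ν - 1 with hμ
  set s := Real.sqrt (μ^2 + x^2) with hsdef
  have hs2 : s^2 = μ^2 + x^2 := Real.sq_sqrt (by positivity)
  have hspos : 0 < s := Real.sqrt_pos.2 (by positivity)
  have habs : |μ| < s := by
    have h : |μ|^2 < s^2 := by rw [hs2, sq_abs]; nlinarith
    exact lt_of_pow_lt_pow_left₀ 2 hspos.le h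
  have hμs : 0 < μ + s := by linarith [neg_abs_le μ]
  have ha := besselK_pos hx μ
  have hb := besselK_pos hx ν
  have hcp := besselK_pos hx (μ-1)
  have hrec := besselK_recurrence hx μ
  have hμ1 : μ + 1 = ν := by rw [hμ]; ring
  rw [hμ1] at hrec
  have htur := turan hx μ
  rw [hμ1] at htur
  set a := besselK μ x with hadef
  set b := besselK ν x with hbdef
  set c := besselK (μ-1) x with hcdef
  have hc' : x*c = x*b - 2*μ*a := by
    have h := hrec
    field_simp at h
    linarith
  have h1 : x * a^2 + 2*μ*a*b < x * b^2 := by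
    nlinarith [mul_lt_mul_of_pos_left htur hx]
  have h2 : (x*a + μ*b)^2 < (s*b)^2 := by
    nlinarith [mul_lt_mul_of_pos_left h1 hx, hs2, sq_nonneg b, hb]
  have key : x*a + μ*b < s*b := by
    rcases le_or_gt (x*a + μ*b) 0 with h|h
    · nlinarith [mul_pos hspos hb]
    · exact lt_of_pow_lt_pow_left₀ 2 (mul_pos hspos hb).le h2
  rw [div_lt_div_iff₀ hb hμs]
  have hK := mul_lt_mul_of_pos_right key hμs
  have h3 : x*(a*(μ+s)) < x*(x*b) := by nlinarith [hK, hs2, hb.le]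
  exact lt_of_mul_lt_mul_left h3 hx.le
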